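/- arXiv:2401.07069 — 4 statements merged into one kernel-verified Lean document; each statement's English description precedes it below -/
import Mathlib

section
/- Let S ⊆ U_{6n} ∖ {1} with S = S^{−1}. For each integer j with 0 ≤ j ≤ 2n−1, the complex number χ_j(S) = ∑_{s∈S} χ_j(s) is an eigenvalue of the adjacency matrix of the Cayley graph Cay(U_{6n}, S), regarded as a matrix over ℂ. -/
open Complex SemidirectProduct Polynomial
open scoped Pointwise

namespace U6nPaper

/-- The inversion automorphism of `Multiplicative (ZMod 3)`. -/
def iota : MulAut (Multiplicative (ZMod 3)) :=
  { toFun := fun x => x⁻¹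
    invFun := fun x => x⁻¹
    left_inv := fun x => inv_inv x
    right_inv := fun x => inv_inv x
    map_mul' := fun x y => mul_inv x y }

lemma iota_sq : iota ^ 2 = 1 := by
  ext x
  simp [sq, iota]

/-- The homomorphism `ZMod 2 → Aut(ZMod 3)` sending `1` to inversion. -/
def sgn2 : Multiplicative (ZMod 2) →* MulAut (Multiplicative (ZMod 3)) where
  toFun x := iota ^ (Multiplicative.toAdd x).val
  map_one' := by simp
  map_mul' x y := by
    simp only [toAdd_mul, ZMod.val_add, ← pow_eq_pow_mod _ iota_sq, pow_add]

/-- The action of `ZMod (2n)` on `ZMod 3` where `r` acts by multiplication by `(-1)^r`. -/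
def phi (n : ℕ) : Multiplicative (ZMod (2 * n)) →* MulAut (Multiplicative (ZMod 3)) :=
  sgn2.comp (AddMonoidHom.toMultiplicative
    ((ZMod.castHom ⟨n, rfl⟩ (ZMod 2)).toAddMonoidHom))

/-- The group `U_{6n} = ⟨a, b ∣ a^{2n} = b³ = 1, a⁻¹ba = b⁻¹⟩`, realized as the semidirect
product `ZMod 3 ⋊ ZMod (2n)`. -/
abbrev U6n (n : ℕ) := Multiplicative (ZMod 3) ⋊[phi n] Multiplicative (ZMod (2 * n))

/-- The generator `a` of `U_{6n}` (of order `2n`). -/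
def aU (n : ℕ) : U6n n := inr (Multiplicative.ofAdd (1 : ZMod (2 * n)))

/-- The generator `b` of `U_{6n}` (of order `3`). -/
def bU (n : ℕ) : U6n n := inl (Multiplicative.ofAdd (1 : ZMod 3))

def u6nEquiv (n : ℕ) : U6n n ≃ ZMod 3 × ZMod (2 * n) where
  toFun g := (Multiplicative.toAdd g.left, Multiplicative.toAdd g.right)
  invFun p := ⟨Multiplicative.ofAdd p.1, Multiplicative.ofAdd p.2⟩
  left_inv g := rfl
  right_inv p := rfl

instance (n : ℕ) [NeZero n] : Fintype (U6n n) :=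
  haveI : NeZero (2 * n) := ⟨by have := NeZero.ne n; omega⟩
  Fintype.ofEquiv _ (u6nEquiv n).symm

/-- An element `a^r b^t` of `U_{6n}` (with `0 ≤ r < 2n`) is even if `r` is even. -/
def IsEvenElt {n : ℕ} (g : U6n n) : Prop := Even (Multiplicative.toAdd g.right).val

/-- The Cayley graph of a group `G` with connection set `S`: `g` and `h` are adjacent
iff `h * g⁻¹ ∈ S` (as a simple graph; for `1 ∉ S = S⁻¹` this is the usual notion). -/
def cayleyGraph {G : Type*} [Group G] (S : Set G) : SimpleGraph G :=
  SimpleGraph.fromRel (fun g h => h * g⁻¹ ∈ S)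

open scoped Classical in
/-- The adjacency matrix of a simple graph, over `ℂ`. -/
noncomputable def adjMat {V : Type*} (Γ : SimpleGraph V) : Matrix V V ℂ :=
  fun g h => if Γ.Adj g h then 1 else 0

/-- A simple graph is integral if every eigenvalue of its adjacency matrix is an integer. -/
def IsIntegral {V : Type*} [Fintype V] [DecidableEq V] (Γ : SimpleGraph V) : Prop :=
  ∀ z ∈ spectrum ℂ (adjMat Γ), ∃ m : ℤ, z = (m : ℂ)

/-- The root of unity `ω = exp(πi/n)`. -/
noncomputable def om (n : ℕ) : ℂ := Complex.exp (Real.pi * Complex.I / n)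

/-- The linear character `χ_j` of `U_{6n}`: `χ_j(a^r b^t) = ω^{jr}`. -/
noncomputable def chi (n j : ℕ) (g : U6n n) : ℂ :=
  om n ^ (j * (Multiplicative.toAdd g.right).val)

/-- The degree-two character `ψ_k` of `U_{6n}`: `ψ_k(a^r b^t)` equals `2ω^{kr}` if `r` is even
and `t = 0`, `-ω^{kr}` if `r` is even and `t ∈ {1,2}`, and `0` if `r` is odd. -/
noncomputable def psi (n k : ℕ) (g : U6n n) : ℂ :=
  if Even (Multiplicative.toAdd g.right).val then
    (if g.left = 1 then 2 else -1) * om n ^ (k * (Multiplicative.toAdd g.right).val)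
  else 0

/-- `f(A) = ∑_{s ∈ A} f(s)`. -/
noncomputable def fsum {α : Type*} (f : α → ℂ) (A : Finset α) : ℂ := ∑ s ∈ A, f s

/-- `f(A²) = ∑_{s,t ∈ A} f(s·t)`. -/
noncomputable def fsum2 {α : Type*} [Mul α] (f : α → ℂ) (A : Finset α) : ℂ :=
  ∑ s ∈ A, ∑ t ∈ A, f (s * t)

/-- The Boolean algebra `B(H)` of a group `H`: the smallest family of subsets of `H`
containing all subgroups and closed under complements, unions and intersections.
`InBoolAlg H s` says `s ∈ B(H)`. -/
inductive InBoolAlg (H : Type*) [Group H] : Set H → Prop where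
  | subgroup (K : Subgroup H) : InBoolAlg H (K : Set H)
  | compl {s : Set H} : InBoolAlg H s → InBoolAlg H sᶜ
  | union {s t : Set H} : InBoolAlg H s → InBoolAlg H t → InBoolAlg H (s ∪ t)
  | inter {s t : Set H} : InBoolAlg H s → InBoolAlg H t → InBoolAlg H (s ∩ t)

lemma om_pow_two_mul (n : ℕ) [NeZero n] : om n ^ (2 * n) = 1 := by
  have hn : (n : ℂ) ≠ 0 := Nat.cast_ne_zero.mpr (NeZero.ne n)
  rw [om, ← Complex.exp_nat_mul]
  rw [show ((2 * n : ℕ) : ℂ) * (Real.pi * Complex.I / n) = 2 * Real.pi * Complex.I by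
    push_cast; field_simp]
  exact Complex.exp_two_pi_mul_I

lemma chi_ne_zero (n j : ℕ) (g : U6n n) : chi n j g ≠ 0 := by
  simp [chi, om, Complex.exp_ne_zero]

lemma chi_eq (n j : ℕ) (g : U6n n) :
    chi n j g = (om n ^ j) ^ (Multiplicative.toAdd g.right).val := by
  rw [chi, pow_mul]

lemma chi_mul (n : ℕ) [NeZero n] (j : ℕ) (g h : U6n n) :
    chi n j (g * h) = chi n j g * chi n j h := by
  haveI : NeZero (2 * n) := ⟨by have := NeZero.ne n; omega⟩
  have hz : (om n ^ j) ^ (2 * n) = 1 := by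
    rw [← pow_mul, mul_comm j, pow_mul, om_pow_two_mul, one_pow]
  rw [chi_eq, chi_eq, chi_eq]
  rw [show (Multiplicative.toAdd (g * h).right) =
      Multiplicative.toAdd g.right + Multiplicative.toAdd h.right by
    simp [SemidirectProduct.mul_right]]
  rw [ZMod.val_add, ← pow_eq_pow_mod _ hz, pow_add]

/-- For `1 ∉ S = S⁻¹` and `0 ≤ j ≤ 2n-1`, the number `χ_j(S) = ∑_{s∈S} χ_j(s)` is an
eigenvalue of the adjacency matrix of `Cay(U_{6n}, S)` over `ℂ`. -/
theorem chi_sum_is_eigenvalue (n : ℕ) [NeZero n] (S : Finset (U6n n))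
    (h1 : (1 : U6n n) ∉ S) (hinv : S⁻¹ = S) (j : ℕ) (hj : j ≤ 2 * n - 1) :
    fsum (chi n j) S ∈ spectrum ℂ (adjMat (cayleyGraph (S : Set (U6n n)))) := by
  classical
  set v : U6n n → ℂ := chi n j with hv
  set A := adjMat (cayleyGraph (S : Set (U6n n))) with hA
  -- adjacency matrix entries
  have hadj : ∀ g h : U6n n, A g h = if h * g⁻¹ ∈ S then 1 else 0 := by
    intro g h
    have hiff : (cayleyGraph (S : Set (U6n n))).Adj g h ↔ h * g⁻¹ ∈ S := by
      constructor
      · rintro ⟨hne, hmem | hmem⟩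
        · exact hmem
        · have : (g * h⁻¹)⁻¹ ∈ S := by
            have : g * h⁻¹ ∈ S⁻¹ := by rw [hinv]; exact hmem
            rwa [Finset.mem_inv'] at this
          simpa using this
      · intro hmem
        refine ⟨fun hgh => ?_, Or.inl hmem⟩
        subst hgh
        simp only [mul_inv_cancel] at hmem
        exact h1 hmem
    simp only [hA, adjMat]
    split_ifs with h1' h2' h2'
    · rfl
    · exact absurd (hiff.mp h1') h2'
    · exact absurd (hiff.mpr h2') h1'
    · rfl
  -- mulVec computation
  have hmul : A.mulVec v = fsum (chi n j) S • v := by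
    funext g
    have h0 : A.mulVec v g = ∑ h : U6n n, (if h * g⁻¹ ∈ S then 1 else 0) * v h := by
      simp only [Matrix.mulVec, dotProduct, hadj]
    rw [h0]
    rw [← Fintype.sum_equiv (Equiv.mulRight g)
      (fun s => (if s * g * g⁻¹ ∈ S then (1:ℂ) else 0) * v (s * g))
      (fun h => (if h * g⁻¹ ∈ S then 1 else 0) * v h) (fun s => rfl)]
    simp only [mul_inv_cancel_right]
    have h1' : ∀ s : U6n n, (if s ∈ S then (1 : ℂ) else 0) * v (s * g)
        = if s ∈ S then v s * v g else 0 := by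
      intro s
      split_ifs with hs
      · rw [one_mul]; exact chi_mul n j s g
      · rw [zero_mul]
    simp only [h1']
    rw [Finset.sum_ite_mem, Finset.univ_inter, ← Finset.sum_mul]
    simp [fsum, hv, smul_eq_mul]
  -- convert to eigenvalue of the linear map
  rw [← AlgEquiv.spectrum_eq (Matrix.toLinAlgEquiv' (R := ℂ) (n := U6n n)) A]
  rw [← Module.End.hasEigenvalue_iff_mem_spectrum]
  refine Module.End.hasEigenvalue_of_hasEigenvector (x := v) ⟨?_, ?_⟩
  · rw [Module.End.mem_eigenspace_iff]
    show Matrix.toLin' A v = _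
    rw [Matrix.toLin'_apply, hmul]
  · intro hv0
    exact chi_ne_zero n j 1 (congrFun hv0 1)

end U6nPaper
end

section
/- Let n > 1 be an integer and S = S₁ ∪ S₂ ⊆ U_{6n}, where S₁ = ⟨a²⟩ ∖ {1} and S₂ = {a^{2r+1}, a^{2r+1}b : 0 ≤ r ≤ n−1}. Then Cay(U_{6n}, S) is a connected integral graph, and the characteristic polynomial of its adjacency matrix equals (X+n+1) · (X+1)^{6n−4} · (X−(2n−1))² · (X−(3n−1)). -/
open Complex SemidirectProduct Polynomial
open scoped Pointwise

namespace U6nPaper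

section Dev
variable (n : ℕ)

/-- parity ring hom -/
def par : ZMod (2*n) →+* ZMod 2 := ZMod.castHom ⟨n, rfl⟩ (ZMod 2)

lemma phi_eq (u : Multiplicative (ZMod (2*n))) :
    phi n u = iota ^ (par n (Multiplicative.toAdd u)).val := rfl

lemma phi_apply (u : Multiplicative (ZMod (2*n))) (x : Multiplicative (ZMod 3)) :
    phi n u x = if par n (Multiplicative.toAdd u) = 0 then x else x⁻¹ := by
  rw [phi_eq]
  rcases (show par n (Multiplicative.toAdd u) = 0 ∨ par n (Multiplicative.toAdd u) = 1 by
    generalize par n (Multiplicative.toAdd u) = p; revert p; decide) with h | h <;>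
    simp [h, iota, show ZMod.val (1 : ZMod 2) = 1 from rfl]

/-- class map -/
def clsf (g : U6n n) : ZMod 3 × ZMod 2 :=
  (Multiplicative.toAdd g.left, par n (Multiplicative.toAdd g.right))

lemma clsf_mul_inv (g h : U6n n) :
    clsf n (h * g⁻¹) =
      ((Multiplicative.toAdd h.left) +
        (if par n (Multiplicative.toAdd h.right) = par n (Multiplicative.toAdd g.right)
          then -(Multiplicative.toAdd g.left) else (Multiplicative.toAdd g.left)),
       par n (Multiplicative.toAdd h.right) - par n (Multiplicative.toAdd g.right)) := by
  rcases g with ⟨x, r⟩; rcases h with ⟨y, s⟩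
  simp only [clsf, SemidirectProduct.mul_left, SemidirectProduct.mul_right,
    SemidirectProduct.inv_left, SemidirectProduct.inv_right]
  rw [show (phi n) s ((phi n) r⁻¹ x⁻¹) = (phi n) (s * r⁻¹) x⁻¹ from by rw [map_mul]; rfl,
    phi_apply]
  have hpar : par n (Multiplicative.toAdd (s * r⁻¹)) =
      par n (Multiplicative.toAdd s) - par n (Multiplicative.toAdd r) := by
    simp [map_sub, sub_eq_add_neg]
  rw [hpar]
  by_cases h : par n (Multiplicative.toAdd s) = par n (Multiplicative.toAdd r) <;>
    simp [h, sub_eq_zero, Prod.ext_iff, toAdd_mul, toAdd_inv] <;> abel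
end Dev
section Dev2
variable (n : ℕ)

lemma par_natCast (k : ℕ) : par n ((k : ℕ) : ZMod (2*n)) = (k : ZMod 2) := map_natCast _ k

lemma par_apply [NeZero n] (r : ZMod (2*n)) : par n r = ((r.val : ℕ) : ZMod 2) := by
  haveI : NeZero (2*n) := ⟨by have := NeZero.ne n; omega⟩
  conv_lhs => rw [show r = ((r.val : ℕ) : ZMod (2*n)) by simp [ZMod.natCast_val, ZMod.cast_id]]
  rw [par_natCast]

lemma par_eq_zero_iff [NeZero n] (r : ZMod (2*n)) : par n r = 0 ↔ r.val % 2 = 0 := by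
  rw [par_apply, ← ZMod.natCast_mod]
  rcases Nat.mod_two_eq_zero_or_one r.val with h | h <;> rw [h] <;> simp <;> decide

lemma par_eq_one_iff [NeZero n] (r : ZMod (2*n)) : par n r = 1 ↔ r.val % 2 = 1 := by
  rw [par_apply, ← ZMod.natCast_mod]
  rcases Nat.mod_two_eq_zero_or_one r.val with h | h <;> rw [h] <;> simp <;> decide

lemma aU_pow (k : ℕ) : (aU n) ^ k = SemidirectProduct.inr (Multiplicative.ofAdd ((k : ℕ) : ZMod (2*n))) := by
  rw [aU, ← map_pow]
  congr 1
  rw [← ofAdd_nsmul]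
  congr 1
  simp

lemma aU_zpow (k : ℤ) : (aU n) ^ k = SemidirectProduct.inr (Multiplicative.ofAdd ((k : ℤ) : ZMod (2*n))) := by
  rw [aU, ← map_zpow]
  congr 1
  rw [← ofAdd_zsmul]
  congr 1
  rw [zsmul_eq_mul, mul_one]

lemma mem_zpowers_iff' [NeZero n] (x : U6n n) :
    x ∈ Subgroup.zpowers (aU n ^ 2) ↔
      x.left = 1 ∧ par n (Multiplicative.toAdd x.right) = 0 := by
  rw [Subgroup.mem_zpowers_iff]
  constructor
  · rintro ⟨k, hk⟩
    rw [← hk, ← zpow_natCast, ← zpow_mul, aU_zpow]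
    refine ⟨rfl, ?_⟩
    simp only [right_inr, toAdd_ofAdd]
    push_cast
    rw [map_mul]
    have h2 : par n (2 : ZMod (2*n)) = 0 := by
      have h := par_natCast n 2
      push_cast at h
      rw [h]
      decide
    rw [h2, zero_mul]
  · rintro ⟨h1, h2⟩
    rw [par_eq_zero_iff] at h2
    refine ⟨((Multiplicative.toAdd x.right).val / 2 : ℕ), ?_⟩
    rw [zpow_natCast, ← pow_mul, aU_pow]
    have h3 : 2 * ((Multiplicative.toAdd x.right).val / 2) = (Multiplicative.toAdd x.right).val := by
      omega
    rw [h3]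
    rcases x with ⟨xl, xr⟩
    simp only at h1 ⊢
    rw [show xl = 1 from h1]
    congr 1
    simp [ZMod.natCast_val, ZMod.cast_id]
end Dev2
section Dev3
variable (n : ℕ)

/-- The connection set. -/
def Sset : Set (U6n n) :=
  ((Subgroup.zpowers (aU n ^ 2) : Set (U6n n)) \ {1}) ∪
    {x | ∃ r : ℕ, r ≤ n - 1 ∧
      (x = aU n ^ (2 * r + 1) ∨ x = aU n ^ (2 * r + 1) * bU n)}

lemma par_odd (r : ℕ) : par n ((2 * r + 1 : ℕ) : ZMod (2*n)) = 1 := by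
  rw [par_natCast]
  push_cast
  rw [show (2 : ZMod 2) = 0 by decide]
  ring

lemma mem_S2_iff (hn : 1 < n) [NeZero n] (x : U6n n) :
    x ∈ {x : U6n n | ∃ r : ℕ, r ≤ n - 1 ∧
      (x = aU n ^ (2 * r + 1) ∨ x = aU n ^ (2 * r + 1) * bU n)} ↔
    (par n (Multiplicative.toAdd x.right) = 1 ∧
      (Multiplicative.toAdd x.left = 0 ∨ Multiplicative.toAdd x.left = 2)) := by
  haveI : NeZero (2*n) := ⟨by omega⟩
  constructor
  · rintro ⟨r, hr, h | h⟩ <;> subst h <;> rw [aU_pow]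
    · exact ⟨par_odd n r, Or.inl rfl⟩
    · refine ⟨?_, Or.inr ?_⟩
      · rw [SemidirectProduct.mul_right]
        simp only [right_inr, bU, SemidirectProduct.right_inl, mul_one, toAdd_ofAdd]
        exact par_odd n r
      · rw [SemidirectProduct.mul_left, SemidirectProduct.left_inr, one_mul,
          SemidirectProduct.right_inr, bU, SemidirectProduct.left_inl, phi_apply]
        rw [toAdd_ofAdd, if_neg (by rw [par_odd n r]; decide)]
        decide
  · rintro ⟨hp, hl⟩
    rw [par_eq_one_iff] at hp
    set v := (Multiplicative.toAdd x.right).val with hv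
    have hvlt : v < 2 * n := ZMod.val_lt _
    refine ⟨v / 2, by omega, ?_⟩
    have hv2 : 2 * (v / 2) + 1 = v := by omega
    have hxr : ((2 * (v / 2) + 1 : ℕ) : ZMod (2*n)) = Multiplicative.toAdd x.right := by
      rw [hv2, hv]
      simp [ZMod.natCast_val, ZMod.cast_id]
    rcases hl with hl | hl
    · left
      rw [aU_pow]
      ext
      · rw [SemidirectProduct.left_inr]
        exact toAdd_eq_zero.mp hl
      · rw [SemidirectProduct.right_inr, ← ofAdd_toAdd x.right, hxr]
    · right
      rw [aU_pow]
      ext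
      · rw [SemidirectProduct.mul_left, SemidirectProduct.left_inr, one_mul,
          SemidirectProduct.right_inr, bU, SemidirectProduct.left_inl, phi_apply,
          toAdd_ofAdd, if_neg (by rw [par_odd]; decide)]
        have : Multiplicative.toAdd x.left = Multiplicative.toAdd ((Multiplicative.ofAdd (1 : ZMod 3))⁻¹) := by
          rw [hl]; decide
        rw [← ofAdd_toAdd x.left, this, ofAdd_toAdd]
      · rw [SemidirectProduct.mul_right, SemidirectProduct.right_inr, bU,
          SemidirectProduct.right_inl, mul_one, ← ofAdd_toAdd x.right, hxr]

lemma mem_S_iff (hn : 1 < n) [NeZero n] (x : U6n n) :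
    x ∈ Sset n ↔
      (par n (Multiplicative.toAdd x.right) = 0 ∧ Multiplicative.toAdd x.left = 0 ∧ x ≠ 1) ∨
      (par n (Multiplicative.toAdd x.right) = 1 ∧
        (Multiplicative.toAdd x.left = 0 ∨ Multiplicative.toAdd x.left = 2)) := by
  rw [Sset, Set.mem_union, Set.mem_diff, mem_S2_iff n hn, Set.mem_singleton_iff, SetLike.mem_coe,
    mem_zpowers_iff']
  rw [← toAdd_eq_zero]
  tauto

end Dev3
section Dev4
variable (n : ℕ)

/-- adjacency condition on classes -/
def Mcond (c d : ZMod 3 × ZMod 2) : Prop :=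
  (c.2 = d.2 ∧ c.1 = d.1) ∨ (c.2 ≠ d.2 ∧ c.1 + d.1 ≠ 1)

instance (c d : ZMod 3 × ZMod 2) : Decidable (Mcond c d) := by
  unfold Mcond; infer_instance

lemma Mcond_symm {c d : ZMod 3 × ZMod 2} : Mcond c d ↔ Mcond d c := by
  revert c d; decide

lemma Mcond_refl (c : ZMod 3 × ZMod 2) : Mcond c c := by
  revert c; decide

lemma rel_iff (hn : 1 < n) [NeZero n] (g h : U6n n) :
    h * g⁻¹ ∈ Sset n ↔ (g ≠ h ∧ Mcond (clsf n g) (clsf n h)) := by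
  rw [mem_S_iff n hn]
  have hc := clsf_mul_inv n g h
  rw [clsf, Prod.mk.injEq] at hc
  obtain ⟨hL, hR⟩ := hc
  rw [hL, hR, Mcond, clsf, clsf]
  simp only []
  have hne : (h * g⁻¹ ≠ 1) ↔ (g ≠ h) := by
    rw [Ne, mul_inv_eq_one]
    exact not_congr ⟨fun a => a.symm, fun a => a.symm⟩
  rw [hne]
  by_cases hgh : g = h
  · subst hgh
    simp [sub_self, Mcond]
  · simp only [hgh, ne_eq, not_false_eq_true, and_true, true_and]
    generalize Multiplicative.toAdd g.left = b
    generalize Multiplicative.toAdd h.left = a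
    generalize par n (Multiplicative.toAdd g.right) = B
    generalize par n (Multiplicative.toAdd h.right) = A
    revert a b A B
    decide

lemma adj_iff (hn : 1 < n) [NeZero n] (g h : U6n n) :
    (cayleyGraph (Sset n)).Adj g h ↔ (g ≠ h ∧ Mcond (clsf n g) (clsf n h)) := by
  rw [cayleyGraph, SimpleGraph.fromRel_adj, rel_iff n hn, rel_iff n hn]
  constructor
  · rintro ⟨hgh, (⟨-, hm⟩ | ⟨-, hm⟩)⟩
    · exact ⟨hgh, hm⟩
    · exact ⟨hgh, Mcond_symm.mpr hm⟩
  · rintro ⟨hgh, hm⟩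
    exact ⟨hgh, Or.inl ⟨hgh, hm⟩⟩

end Dev4
section Dev5
variable (n : ℕ)

lemma par_one' : par n (1 : ZMod (2*n)) = 1 := map_one _

lemma par_zero' : par n (0 : ZMod (2*n)) = 0 := map_zero _

def mkU (t : ZMod 3) (r : ZMod (2*n)) : U6n n := ⟨Multiplicative.ofAdd t, Multiplicative.ofAdd r⟩

lemma clsf_mkU (t : ZMod 3) (r : ZMod (2*n)) : clsf n (mkU n t r) = (t, par n r) := rfl

lemma clsf_one : clsf n (1 : U6n n) = (0, 0) := by
  rw [clsf]
  have h1 : (1 : U6n n).left = 1 := rfl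
  have h2 : (1 : U6n n).right = 1 := rfl
  rw [h1, h2]
  simp

lemma ne_of_clsf {g h : U6n n} (hne : clsf n g ≠ clsf n h) : g ≠ h := fun e => hne (by rw [e])

lemma adj_of (hn : 1 < n) [NeZero n] {g h : U6n n} (hne : g ≠ h)
    (hm : Mcond (clsf n g) (clsf n h)) : (cayleyGraph (Sset n)).Adj g h :=
  (adj_iff n hn g h).mpr ⟨hne, hm⟩

lemma reachable_one (hn : 1 < n) [NeZero n] (g : U6n n) :
    (cayleyGraph (Sset n)).Reachable g 1 := by
  haveI : NeZero (2*n) := ⟨by omega⟩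
  set t := Multiplicative.toAdd g.left with ht
  set p := par n (Multiplicative.toAdd g.right) with hp
  have hg : clsf n g = (t, p) := rfl
  have hmk : ∀ (t' : ZMod 3) (r' : ZMod (2*n)), clsf n (mkU n t' r') = (t', par n r') :=
    clsf_mkU n
  by_cases h1 : g = 1
  · rw [h1]
  have step : ∀ (c : ZMod 3 × ZMod 2), Mcond c (0,0) → (cayleyGraph (Sset n)).Reachable g 1 →
      True := fun _ _ _ => trivial
  clear step
  have ht3 : t = 0 ∨ t = 1 ∨ t = 2 := by generalize t = a; revert a; decide
  have hp2 : p = 0 ∨ p = 1 := by generalize p = a; revert a; decide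
  -- basic adjacency to 1 from class (c) when Mcond c (0,0)
  have adj1 : ∀ h' : U6n n, h' ≠ 1 → Mcond (clsf n h') (0, 0) →
      (cayleyGraph (Sset n)).Adj h' 1 := by
    intro h' hne hm
    exact adj_of n hn hne (by rw [clsf_one]; exact hm)
  rcases ht3 with ht0 | ht0 | ht0
  · -- t = 0 : direct edge
    exact (adj1 g h1 (by rw [hg, ht0]; rcases hp2 with h|h <;> rw [h] <;> decide)).reachable
  · -- t = 1
    rcases hp2 with hp0 | hp0
    · -- via w = mkU 2 1
      have hw : clsf n (mkU n 2 1) = (2, 1) := by rw [hmk, par_one']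
      refine ((adj_of n hn (ne_of_clsf n ?_) ?_).reachable).trans
        ((adj1 (mkU n 2 1) (ne_of_clsf n ?_) ?_).reachable)
      · rw [hg, ht0, hp0, hw]; decide
      · rw [hg, ht0, hp0, hw]; decide
      · rw [hw, clsf_one]; decide
      · rw [hw]; decide
    · -- via u = mkU 2 0 then v = mkU 0 1
      have hu : clsf n (mkU n 2 0) = (2, 0) := by rw [hmk, par_zero']
      have hv : clsf n (mkU n 0 1) = (0, 1) := by rw [hmk, par_one']
      have r1 : (cayleyGraph (Sset n)).Adj g (mkU n 2 0) :=
        adj_of n hn (ne_of_clsf n (by rw [hg, ht0, hp0, hu]; decide))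
          (by rw [hg, ht0, hp0, hu]; decide)
      have r2 : (cayleyGraph (Sset n)).Adj (mkU n 2 0) (mkU n 0 1) :=
        adj_of n hn (ne_of_clsf n (by rw [hu, hv]; decide)) (by rw [hu, hv]; decide)
      have r3 : (cayleyGraph (Sset n)).Adj (mkU n 0 1) (1 : U6n n) :=
        adj1 (mkU n 0 1) (ne_of_clsf n (by rw [hv, clsf_one]; decide)) (by rw [hv]; decide)
      exact r1.reachable.trans (r2.reachable.trans r3.reachable)
  · -- t = 2
    rcases hp2 with hp0 | hp0
    · -- via v = mkU 0 1
      have hv : clsf n (mkU n 0 1) = (0, 1) := by rw [hmk, par_one']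
      refine ((adj_of n hn (ne_of_clsf n ?_) ?_).reachable).trans
        ((adj1 (mkU n 0 1) (ne_of_clsf n ?_) ?_).reachable)
      · rw [hg, ht0, hp0, hv]; decide
      · rw [hg, ht0, hp0, hv]; decide
      · rw [hv, clsf_one]; decide
      · rw [hv]; decide
    · exact (adj1 g h1 (by rw [hg, ht0, hp0]; decide)).reachable

lemma connected_cay (hn : 1 < n) [NeZero n] : (cayleyGraph (Sset n)).Connected := by
  rw [SimpleGraph.connected_iff]
  refine ⟨fun g h => (reachable_one n hn g).trans (reachable_one n hn h).symm, ⟨1⟩⟩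

end Dev5
section Dev6
open Matrix
variable {m : Type*} [Fintype m] [DecidableEq m]

lemma charpoly_conj (A P Pi : Matrix m m ℂ) (h : Pi * P = 1) :
    (Pi * A * P).charpoly = A.charpoly := by
  have h2 : P * Pi = 1 := mul_eq_one_comm.mpr h
  have hmap : (Pi.map (Polynomial.C (R := ℂ))) * (P.map Polynomial.C) = 1 := by
    rw [← Matrix.map_mul, h, Matrix.map_one _ (map_zero _) (map_one _)]
  have hch : charmatrix (Pi * A * P) =
      (Pi.map Polynomial.C) * charmatrix A * (P.map Polynomial.C) := by
    rw [charmatrix, charmatrix, Matrix.mul_sub, Matrix.sub_mul]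
    congr 1
    · rw [← (Matrix.scalar_commute (Polynomial.X (R := ℂ))
        (fun r' => Commute.all _ _) (Pi.map Polynomial.C)).eq, Matrix.mul_assoc, hmap,
        Matrix.mul_one]
    · simp only [RingHom.mapMatrix_apply, ← Matrix.map_mul]
  rw [Matrix.charpoly, Matrix.charpoly, hch, det_mul, det_mul]
  have hd : det (Pi.map (Polynomial.C (R := ℂ))) * det (P.map Polynomial.C) = 1 := by
    rw [← det_mul, hmap, det_one]
  calc det (Pi.map Polynomial.C) * det (charmatrix A) * det (P.map Polynomial.C)
      = det (charmatrix A) * (det (Pi.map Polynomial.C) * det (P.map Polynomial.C)) := by ring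
    _ = det (charmatrix A) := by rw [hd, mul_one]

lemma charpoly_diag (d : m → ℂ) :
    (Matrix.diagonal d).charpoly = ∏ i, (Polynomial.X - Polynomial.C (d i)) := by
  rw [Matrix.charpoly]
  have : charmatrix (Matrix.diagonal d) =
      Matrix.diagonal (fun i => Polynomial.X - Polynomial.C (d i)) := by
    apply Matrix.ext
    intro i j
    by_cases h : i = j
    · subst h; simp
    · rw [charmatrix_apply_ne _ _ _ h, Matrix.diagonal_apply_ne _ h,
        Matrix.diagonal_apply_ne _ h]
      simp
  rw [this, det_diagonal]
end Dev6
section Dev7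
open Matrix

/-- eigenvector columns for the 3-part -/
def uval : ZMod 3 → ZMod 3 → ℤ := fun k t =>
  if k = 0 then 1
  else if k = 1 then (if t = 0 then 1 else if t = 1 then -1 else 0)
  else (if t = 2 then -2 else 1)

/-- the 6×6 quotient matrix over ℤ -/
def M0 : Matrix (ZMod 3 × ZMod 2) (ZMod 3 × ZMod 2) ℤ :=
  Matrix.of fun c d => if Mcond c d then 1 else 0

def W0 : Matrix (ZMod 3 × ZMod 2) (ZMod 3 × ZMod 2) ℤ :=
  Matrix.of fun c k => uval k.1 c.1 * (if c.2 = 1 ∧ k.2 = 1 then -1 else 1)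

def V0 : Matrix (ZMod 3 × ZMod 2) (ZMod 3 × ZMod 2) ℤ :=
  Matrix.of fun k c =>
    (uval k.1 c.1 * (if k.1 = 0 then 2 else if k.1 = 1 then 3 else 1)) *
      (if c.2 = 1 ∧ k.2 = 1 then -1 else 1)

def mu0 : ZMod 3 × ZMod 2 → ℤ := fun k =>
  if k.2 = 0 then (if k.1 = 0 then 3 else if k.1 = 1 then 2 else 0)
  else (if k.1 = 0 then -1 else if k.1 = 1 then 0 else 2)

lemma V0_mul_W0 : V0 * W0 = (12 : ℤ) • 1 := by decide

lemma M0_mul_W0 : M0 * W0 = W0 * Matrix.diagonal mu0 := by decide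
end Dev7
section Dev8
open Matrix
variable (n : ℕ) [NeZero n]

noncomputable def Qmat : Matrix (Fin n) (Fin n) ℂ :=
  Matrix.of fun r i => if i = 0 then 1 else (if r = 0 then 1 else 0) - (if r = i then 1 else 0)

noncomputable def Qinv : Matrix (Fin n) (Fin n) ℂ :=
  Matrix.of fun i s => ((n : ℂ))⁻¹ - (if i = 0 then 0 else if i = s then 1 else 0)

def Jmat : Matrix (Fin n) (Fin n) ℂ := Matrix.of fun _ _ => 1

def dJ : Fin n → ℂ := fun i => if i = 0 then (n : ℂ) else 0

lemma Qmat_col_sum (j : Fin n) : ∑ s, Qmat n s j = if j = 0 then (n : ℂ) else 0 := by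
  by_cases hj : j = 0
  · subst hj
    simp [Qmat]
  · rw [if_neg hj]
    simp only [Qmat, of_apply, if_neg hj]
    rw [Finset.sum_sub_distrib]
    rw [Finset.sum_ite_eq' Finset.univ (0 : Fin n) (fun _ => (1:ℂ)),
      Finset.sum_ite_eq' Finset.univ j (fun _ => (1:ℂ))]
    simp

lemma J_mul_Q : Jmat n * Qmat n = Qmat n * Matrix.diagonal (dJ n) := by
  apply Matrix.ext
  intro r j
  rw [Matrix.mul_apply, Matrix.mul_diagonal]
  have : ∀ s, Jmat n r s * Qmat n s j = Qmat n s j := fun s => one_mul _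
  rw [Finset.sum_congr rfl (fun s _ => this s), Qmat_col_sum]
  by_cases hj : j = 0
  · subst hj; simp [Qmat, dJ]
  · simp [hj, dJ]

lemma Qinv_mul_Q : Qinv n * Qmat n = 1 := by
  have hn0 : (n : ℂ) ≠ 0 := Nat.cast_ne_zero.mpr (NeZero.ne n)
  apply Matrix.ext
  intro i j
  rw [Matrix.mul_apply]
  by_cases hi : i = 0
  · subst hi
    have expand : ∀ s, Qinv n 0 s * Qmat n s j = (n : ℂ)⁻¹ * Qmat n s j := by
      intro s; simp [Qinv]
    rw [Finset.sum_congr rfl (fun s _ => expand s), ← Finset.mul_sum, Qmat_col_sum]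
    by_cases hj : j = 0
    · subst hj
      rw [if_pos rfl, inv_mul_cancel₀ hn0, Matrix.one_apply_eq]
    · rw [if_neg hj, mul_zero, Matrix.one_apply_ne (fun h => hj h.symm)]
  · have expand : ∀ s, Qinv n i s * Qmat n s j =
        (n : ℂ)⁻¹ * Qmat n s j - (if i = s then Qmat n s j else 0) := by
      intro s
      rw [Qinv, of_apply, if_neg hi, sub_mul]
      congr 1
      by_cases his : i = s
      · rw [if_pos his, if_pos his, one_mul]
      · rw [if_neg his, if_neg his, zero_mul]
    rw [Finset.sum_congr rfl (fun s _ => expand s), Finset.sum_sub_distrib, ← Finset.mul_sum,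
      Qmat_col_sum, Finset.sum_ite_eq Finset.univ i (fun s => Qmat n s j),
      if_pos (Finset.mem_univ i)]
    by_cases hj : j = 0
    · subst hj
      rw [if_pos rfl, inv_mul_cancel₀ hn0, Qmat, of_apply, if_pos rfl,
        Matrix.one_apply_ne hi, sub_eq_zero]
    · rw [if_neg hj, mul_zero, Qmat, of_apply, if_neg hj, zero_sub, neg_sub]
      by_cases hij : i = j
      · rw [if_pos hij, if_neg hi, sub_zero, hij, Matrix.one_apply_eq]
      · rw [if_neg hij, if_neg hi, sub_self, Matrix.one_apply_ne hij]
end Dev8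
section Dev9
open Matrix Kronecker
variable (n : ℕ) [NeZero n]

noncomputable def MmatC : Matrix (ZMod 3 × ZMod 2) (ZMod 3 × ZMod 2) ℂ :=
  M0.map (Int.castRingHom ℂ)

noncomputable def WC : Matrix (ZMod 3 × ZMod 2) (ZMod 3 × ZMod 2) ℂ :=
  W0.map (Int.castRingHom ℂ)

noncomputable def WinvC : Matrix (ZMod 3 × ZMod 2) (ZMod 3 × ZMod 2) ℂ :=
  (12 : ℂ)⁻¹ • V0.map (Int.castRingHom ℂ)

noncomputable def muC : ZMod 3 × ZMod 2 → ℂ := fun c => ((mu0 c : ℤ) : ℂ)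

lemma V0_mul_W0' : V0 * W0 = Matrix.diagonal (fun _ => (12 : ℤ)) := by decide

lemma WinvC_mul_WC : WinvC * WC = 1 := by
  rw [WinvC, WC, Matrix.smul_mul, ← Matrix.map_mul, V0_mul_W0',
    Matrix.diagonal_map (map_zero _), ← Matrix.diagonal_smul]
  have : ((12 : ℂ)⁻¹ • fun _ : ZMod 3 × ZMod 2 => ((Int.castRingHom ℂ) (12:ℤ))) =
      fun _ => (1 : ℂ) := by
    funext c
    simp only [Pi.smul_apply, smul_eq_mul, map_ofNat]
    norm_num
  rw [this, Matrix.diagonal_one]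

lemma MC_mul_WC : MmatC * WC = WC * Matrix.diagonal muC := by
  rw [MmatC, WC, ← Matrix.map_mul, M0_mul_W0, Matrix.map_mul, Matrix.diagonal_map (map_zero _)]
  rfl

/-- reindexing of the group by class × block -/
noncomputable def reIdx : U6n n ≃ (ZMod 3 × ZMod 2) × Fin n where
  toFun g := (clsf n g, ⟨(Multiplicative.toAdd g.right).val / 2, by
    have := ZMod.val_lt (Multiplicative.toAdd g.right)
    have hn := NeZero.ne n
    omega⟩)
  invFun p := mkU n p.1.1 (((2 * (p.2 : ℕ) + p.1.2.val : ℕ) : ZMod (2*n)))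
  left_inv g := by
    have hv : ((Multiplicative.toAdd g.right).val : ZMod (2*n)) = Multiplicative.toAdd g.right := by
      simp [ZMod.natCast_val, ZMod.cast_id]
    have hpar : (par n (Multiplicative.toAdd g.right)).val =
        (Multiplicative.toAdd g.right).val % 2 := by
      rw [par_apply, ZMod.val_natCast]
    have harg : 2 * ((Multiplicative.toAdd g.right).val / 2) +
        (par n (Multiplicative.toAdd g.right)).val = (Multiplicative.toAdd g.right).val := by
      rw [hpar]; omega
    dsimp only
    show mkU n (Multiplicative.toAdd g.left) _ = g
    rw [show (clsf n g).2 = par n (Multiplicative.toAdd g.right) from rfl, harg, hv]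
    rcases g with ⟨gl, gr⟩
    rw [mkU]
    congr 1
  right_inv p := by
    rcases p with ⟨⟨t, q⟩, i⟩
    have hlt : 2 * (i : ℕ) + q.val < 2 * n := by
      have h1 : (i : ℕ) < n := i.2
      have h2 : q.val < 2 := q.val_lt
      omega
    have hval : (((2 * (i : ℕ) + q.val : ℕ) : ZMod (2*n))).val = 2 * (i : ℕ) + q.val := by
      rw [ZMod.val_natCast_of_lt hlt]
    have hq : par n (((2 * (i : ℕ) + q.val : ℕ) : ZMod (2*n))) = q := by
      rw [par_natCast]
      push_cast
      rw [show ((2:ZMod 2)) = 0 by decide, zero_mul, zero_add, ZMod.natCast_val, ZMod.cast_id]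
    show ((clsf n (mkU n t _), _) : (ZMod 3 × ZMod 2) × Fin n) = _
    rw [clsf_mkU, hq]
    refine Prod.ext rfl (Fin.ext ?_)
    show ((((2 * (i : ℕ) + q.val : ℕ) : ZMod (2*n))).val) / 2 = (i : ℕ)
    rw [hval]
    have h2 : q.val < 2 := q.val_lt
    omega

lemma clsf_reIdx_symm (p : (ZMod 3 × ZMod 2) × Fin n) :
    clsf n ((reIdx n).symm p) = p.1 :=
  congrArg Prod.fst ((reIdx n).apply_symm_apply p)

lemma adjMat_reindexed (hn : 1 < n) :
    Matrix.reindex (reIdx n) (reIdx n) (adjMat (cayleyGraph (Sset n))) =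
      MmatC ⊗ₖ Jmat n - 1 := by
  apply Matrix.ext
  rintro ⟨c, i⟩ ⟨d, j⟩
  rw [Matrix.reindex_apply, Matrix.submatrix_apply]
  simp only [adjMat]
  rw [Matrix.sub_apply, Matrix.kroneckerMap_apply]
  have hM : MmatC c d = if Mcond c d then (1:ℂ) else 0 := by
    rw [MmatC, Matrix.map_apply, M0, Matrix.of_apply, apply_ite (Int.castRingHom ℂ),
      _root_.map_one, _root_.map_zero]
  have hJ : Jmat n i j = 1 := rfl
  rw [hM, hJ, mul_one]
  have hone : (1 : Matrix ((ZMod 3 × ZMod 2) × Fin n) ((ZMod 3 × ZMod 2) × Fin n) ℂ)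
      ((c,i)) ((d,j)) = if ((c,i) : (ZMod 3 × ZMod 2) × Fin n) = (d,j) then 1 else 0 := by
    by_cases h : ((c,i) : (ZMod 3 × ZMod 2) × Fin n) = (d,j)
    · rw [if_pos h, h, Matrix.one_apply_eq]
    · rw [if_neg h, Matrix.one_apply_ne h]
  rw [hone]
  have hadj := adj_iff n hn ((reIdx n).symm (c, i)) ((reIdx n).symm (d, j))
  rw [clsf_reIdx_symm, clsf_reIdx_symm] at hadj
  by_cases h : ((c,i) : (ZMod 3 × ZMod 2) × Fin n) = (d,j)
  · have hcd : c = d := congrArg Prod.fst h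
    have : ¬ (cayleyGraph (Sset n)).Adj ((reIdx n).symm (c, i)) ((reIdx n).symm (d, j)) := by
      rw [hadj]
      rintro ⟨hne, -⟩
      exact hne (congrArg (reIdx n).symm h)
    rw [if_pos h, if_neg this, if_pos (hcd ▸ Mcond_refl c), sub_self]
  · have hne : (reIdx n).symm (c, i) ≠ (reIdx n).symm (d, j) :=
      fun he => h ((reIdx n).symm.injective he)
    rw [if_neg h, sub_zero]
    by_cases hm : Mcond c d
    · rw [if_pos hm, if_pos (hadj.mpr ⟨hne, hm⟩)]
    · rw [if_neg hm, if_neg (fun ha => hm (hadj.mp ha).2)]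
end Dev9
section Dev10
open Matrix Kronecker Polynomial

lemma prod_C6 (f : ZMod 3 × ZMod 2 → Polynomial ℂ) :
    ∏ c, f c = f (0,0) * f (0,1) * (f (1,0) * f (1,1)) * (f (2,0) * f (2,1)) := by
  rw [show (Finset.univ : Finset (ZMod 3 × ZMod 2)) =
    {(0,0),(0,1),(1,0),(1,1),(2,0),(2,1)} from by decide]
  rw [Finset.prod_insert (by decide), Finset.prod_insert (by decide),
    Finset.prod_insert (by decide), Finset.prod_insert (by decide),
    Finset.prod_insert (by decide), Finset.prod_singleton]
  ring

variable (n : ℕ)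

lemma charpoly_A (hn : 1 < n) [NeZero n] :
    (adjMat (cayleyGraph (Sset n))).charpoly =
      (X + C ((n : ℂ) + 1)) * (X + 1) ^ (6 * n - 4) *
      (X - C (2 * (n : ℂ) - 1)) ^ 2 * (X - C (3 * (n : ℂ) - 1)) := by
  rw [← Matrix.charpoly_reindex (reIdx n), adjMat_reindexed n hn]
  have hP : (WinvC ⊗ₖ Qinv n) * (WC ⊗ₖ Qmat n) = 1 := by
    rw [← Matrix.mul_kronecker_mul, WinvC_mul_WC, Qinv_mul_Q, Matrix.one_kronecker_one]
  rw [← charpoly_conj (MmatC ⊗ₖ Jmat n - 1) (WC ⊗ₖ Qmat n) (WinvC ⊗ₖ Qinv n) hP]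
  have hKP : (MmatC ⊗ₖ Jmat n) * (WC ⊗ₖ Qmat n) =
      (WC ⊗ₖ Qmat n) * (Matrix.diagonal muC ⊗ₖ Matrix.diagonal (dJ n)) := by
    rw [← Matrix.mul_kronecker_mul, MC_mul_WC, J_mul_Q, ← Matrix.mul_kronecker_mul]
  have key : (WinvC ⊗ₖ Qinv n) * (MmatC ⊗ₖ Jmat n - 1) * (WC ⊗ₖ Qmat n) =
      Matrix.diagonal (fun p : (ZMod 3 × ZMod 2) × Fin n => muC p.1 * dJ n p.2 - 1) := by
    rw [Matrix.mul_sub, Matrix.mul_one, Matrix.sub_mul, Matrix.mul_assoc, hKP,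
      ← Matrix.mul_assoc, hP, Matrix.one_mul, Matrix.diagonal_kronecker_diagonal,
      ← Matrix.diagonal_one, ← Matrix.diagonal_sub]
  rw [key, charpoly_diag, Fintype.prod_prod_type]
  have inner : ∀ c : ZMod 3 × ZMod 2, ∏ i : Fin n, (X - C (muC c * dJ n i - 1)) =
      (X - C (muC c * (n : ℂ) - 1)) * (X + 1) ^ (n - 1) := by
    intro c
    rw [← Finset.mul_prod_erase Finset.univ _ (Finset.mem_univ (0 : Fin n))]
    have h1 : ∀ i ∈ Finset.univ.erase (0 : Fin n),
        (X - C (muC c * dJ n i - 1)) = X + 1 := by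
      intro i hi
      rw [show dJ n i = if i = 0 then (n:ℂ) else 0 from rfl,
        if_neg (Finset.ne_of_mem_erase hi), mul_zero, zero_sub, map_neg, _root_.map_one,
        sub_neg_eq_add]
    rw [Finset.prod_congr rfl h1, Finset.prod_const,
      Finset.card_erase_of_mem (Finset.mem_univ _), Finset.card_univ, Fintype.card_fin,
      show dJ n 0 = if (0 : Fin n) = 0 then (n:ℂ) else 0 from rfl, if_pos rfl]
  rw [Finset.prod_congr rfl (fun c _ => inner c), Finset.prod_mul_distrib, Finset.prod_const,
    Finset.card_univ, show Fintype.card (ZMod 3 × ZMod 2) = 6 from rfl]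
  rw [prod_C6 (fun c => X - C (muC c * (n : ℂ) - 1))]
  rw [show muC (0,0) = 3 from by rw [muC, show mu0 (0,0) = 3 from by decide]; norm_num,
    show muC (0,1) = -1 from by rw [muC, show mu0 (0,1) = -1 from by decide]; norm_num,
    show muC (1,0) = 2 from by rw [muC, show mu0 (1,0) = 2 from by decide]; norm_num,
    show muC (1,1) = 0 from by rw [muC, show mu0 (1,1) = 0 from by decide]; norm_num,
    show muC (2,0) = 0 from by rw [muC, show mu0 (2,0) = 0 from by decide]; norm_num,
    show muC (2,1) = 2 from by rw [muC, show mu0 (2,1) = 2 from by decide]; norm_num]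
  rw [show (-1 : ℂ) * (n:ℂ) - 1 = -((n:ℂ)+1) from by ring, map_neg, sub_neg_eq_add]
  rw [show (0 : ℂ) * (n:ℂ) - 1 = -1 from by ring, map_neg, _root_.map_one, sub_neg_eq_add]
  rw [show ((X + 1 : Polynomial ℂ) ^ (n-1)) ^ 6 = (X+1) ^ (6*n - 6) from by
    rw [← pow_mul]; congr 1; omega]
  rw [show 6*n - 4 = (6*n - 6) + 2 from by omega, pow_add]
  ring
end Dev10
section Dev11
open Matrix Polynomial

lemma eval_charpoly_of_mem_spectrum {V : Type*} [Fintype V] [DecidableEq V]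
    {A : Matrix V V ℂ} {z : ℂ} (hz : z ∈ spectrum ℂ A) : A.charpoly.eval z = 0 := by
  rw [spectrum.mem_iff] at hz
  have hdet : ((algebraMap ℂ (Matrix V V ℂ) z) - A).det = 0 := by
    by_contra h
    exact hz ((Matrix.isUnit_iff_isUnit_det _).mpr (isUnit_iff_ne_zero.mpr h))
  have heval : A.charpoly.eval z = ((algebraMap ℂ (Matrix V V ℂ) z) - A).det := by
    rw [Matrix.charpoly, show (Polynomial.eval z : Polynomial ℂ → ℂ) =
      (Polynomial.evalRingHom z : Polynomial ℂ →+* ℂ) from rfl, RingHom.map_det]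
    congr 1
    apply Matrix.ext
    intro i j
    by_cases hij : i = j
    · subst hij
      simp [charmatrix_apply_eq, Matrix.algebraMap_matrix_apply]
    · simp [charmatrix_apply_ne _ _ _ hij, Matrix.algebraMap_matrix_apply, hij]
  rw [heval, hdet]

lemma integral_cay (n : ℕ) (hn : 1 < n) [NeZero n] :
    IsIntegral (cayleyGraph (Sset n)) := by
  intro z hz
  have hev := eval_charpoly_of_mem_spectrum hz
  rw [charpoly_A n hn] at hev
  simp only [eval_mul, eval_pow, eval_add, eval_sub, eval_X, eval_C, eval_one,
    mul_eq_zero, pow_eq_zero_iff (show (6*n-4 : ℕ) ≠ 0 by omega),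
    pow_eq_zero_iff (show (2 : ℕ) ≠ 0 by norm_num)] at hev
  rcases hev with ((h | h) | h) | h
  · exact ⟨-(n+1), by push_cast; linear_combination h⟩
  · exact ⟨-1, by push_cast; linear_combination h⟩
  · exact ⟨2*n-1, by push_cast; linear_combination h⟩
  · exact ⟨3*n-1, by push_cast; linear_combination h⟩
end Dev11
/-- Corollary 4.2: for `n > 1`, `S₁ = ⟨a²⟩ ∖ {1}` and `S₂ = {a^{2r+1}, a^{2r+1}b : 0 ≤ r ≤ n-1}`,
the graph `Cay(U_{6n}, S₁ ∪ S₂)` is connected and integral with spectrum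
`{-n-1, [-1]^{6n-4}, [2n-1]^2, 3n-1}`. -/
theorem corollary_4_2 (n : ℕ) (hn : 1 < n) (S₁ S₂ : Set (U6n n))
    (hS₁ : S₁ = (Subgroup.zpowers (aU n ^ 2) : Set (U6n n)) \ {1})
    (hS₂ : S₂ = {x | ∃ r : ℕ, r ≤ n - 1 ∧
      (x = aU n ^ (2 * r + 1) ∨ x = aU n ^ (2 * r + 1) * bU n)}) :
    haveI : NeZero n := ⟨by omega⟩
    (cayleyGraph (S₁ ∪ S₂)).Connected ∧
    IsIntegral (cayleyGraph (S₁ ∪ S₂)) ∧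
    (adjMat (cayleyGraph (S₁ ∪ S₂))).charpoly =
      (X + C ((n : ℂ) + 1)) * (X + 1) ^ (6 * n - 4) *
      (X - C (2 * (n : ℂ) - 1)) ^ 2 * (X - C (3 * (n : ℂ) - 1)) := by
  haveI : NeZero n := ⟨by omega⟩
  subst hS₁ hS₂
  have hS : ((Subgroup.zpowers (aU n ^ 2) : Set (U6n n)) \ {1}) ∪ {x | ∃ r : ℕ, r ≤ n - 1 ∧
      (x = aU n ^ (2 * r + 1) ∨ x = aU n ^ (2 * r + 1) * bU n)} = Sset n := rfl
  rw [hS]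
  exact ⟨connected_cay n hn, integral_cay n hn, charpoly_A n hn⟩

end U6nPaper
end

section
/- For each integer n > 1, there exists a connected (3n−2)-regular integral simple graph on 6n vertices, i.e., there is a simple graph Γ on a vertex set of cardinality 6n that is connected, regular of degree 3n−2, and all eigenvalues of whose adjacency matrix are integers. -/
open Complex SemidirectProduct Polynomial
open scoped Pointwise

namespace U6nPaper

section AuxIntegral
set_option linter.unusedVariables false
variable {N : ℕ} [NeZero N]

noncomputable def Jm (N : ℕ) : Matrix (ZMod N) (ZMod N) ℂ := fun _ _ => 1
noncomputable def Pm (N : ℕ) (t : ZMod N) : Matrix (ZMod N) (ZMod N) ℂ :=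
  fun x y => if y = x + t then 1 else 0

lemma Pm_zero : Pm N 0 = 1 := by
  ext x y
  simp [Pm, Matrix.one_apply, eq_comm]

lemma Pm_mul_Pm (s t : ZMod N) : Pm N s * Pm N t = Pm N (s + t) := by
  ext x y
  simp only [Matrix.mul_apply, Pm, ite_mul, one_mul, zero_mul]
  rw [Finset.sum_ite_eq' Finset.univ (x + s) (fun z => if y = z + t then (1:ℂ) else 0)]
  simp [add_assoc]

lemma Jm_mul_Jm : Jm N * Jm N = (N : ℂ) • Jm N := by
  ext x y
  simp [Matrix.mul_apply, Jm, ZMod.card]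

lemma Jm_mul_Pm (t : ZMod N) : Jm N * Pm N t = Jm N := by
  ext x y
  simp only [Matrix.mul_apply, Jm, Pm, one_mul]
  have : ∀ z : ZMod N, (if y = z + t then (1:ℂ) else 0) = if z = y - t then 1 else 0 := by
    intro z; congr 1; simp [eq_comm, eq_sub_iff_add_eq]
  simp only [this]
  rw [Finset.sum_ite_eq' Finset.univ (y - t) (fun _ => (1:ℂ))]
  simp

lemma Pm_mul_Jm (t : ZMod N) : Pm N t * Jm N = Jm N := by
  ext x y
  simp only [Matrix.mul_apply, Jm, Pm, mul_one, ite_mul, one_mul, zero_mul]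
  rw [Finset.sum_ite_eq' Finset.univ (x + t)]
  simp

/-- The B matrix: J - P_n - P_{2n} over ZMod (3n). -/
noncomputable def Bm (n : ℕ) : Matrix (ZMod (3*n)) (ZMod (3*n)) ℂ :=
  Jm (3*n) - Pm (3*n) (n : ZMod (3*n)) - Pm (3*n) (2*(n : ZMod (3*n)))

section Bfacts
variable (n : ℕ) (hn : 1 < n)

lemma h3n0 : ((3*n : ℕ) : ZMod (3*n)) = 0 := ZMod.natCast_self _

lemma t_add_t : ((n : ZMod (3*n)) + (n : ZMod (3*n))) = (2*(n : ZMod (3*n))) := by ring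

lemma t2_add_t2 : ((2*(n : ZMod (3*n))) + (2*(n : ZMod (3*n)))) = (n : ZMod (3*n)) := by
  have h := h3n0 n; push_cast at h; linear_combination h

lemma t_add_t2 : ((n : ZMod (3*n)) + (2*(n : ZMod (3*n)))) = 0 := by
  have h := h3n0 n; push_cast at h; linear_combination h

lemma E1 [NeZero (3*n)] : Bm n * Bm n + Bm n = ((3*n : ℕ) : ℂ) • Jm (3*n) - 3 • Jm (3*n) + 2 := by
  have h2 : (2 : Matrix (ZMod (3*n)) (ZMod (3*n)) ℂ) = 1 + 1 := by norm_num
  rw [Bm]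
  simp only [sub_mul, mul_sub, Jm_mul_Jm, Jm_mul_Pm, Pm_mul_Jm, Pm_mul_Pm,
    t_add_t, t2_add_t2, t_add_t2, add_comm (2*(n : ZMod (3*n))) ((n:ℕ) : ZMod (3*n)), Pm_zero]
  rw [h2]
  module

lemma E2 [NeZero (3*n)] : Jm (3*n) * Bm n = (((3*n : ℕ) : ℂ) - 2) • Jm (3*n) := by
  rw [Bm]
  simp only [mul_sub, Jm_mul_Jm, Jm_mul_Pm]
  module


lemma q0 [NeZero (3*n)] :
    (Bm n - 1) * (Bm n + 2) * (Bm n - algebraMap ℂ _ (((3*n : ℕ) : ℂ) - 2)) = 0 := by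
  have h1 : (Bm n - 1) * (Bm n + 2) = Bm n * Bm n + Bm n - 2 := by
    noncomm_ring
    norm_num
  rw [h1, E1]
  have h2 : ((3*n : ℕ) : ℂ) • Jm (3*n) - 3 • Jm (3*n) + 2 - 2
      = (((3*n : ℕ) : ℂ) - 3) • Jm (3*n) := by module
  rw [h2, Algebra.algebraMap_eq_smul_one, smul_mul_assoc, mul_sub, E2, mul_smul_comm, mul_one]
  simp

/-- key annihilating polynomial fact for B² -/
lemma vBB [NeZero (3*n)] :
    aeval (Bm n * Bm n) ((X - 1) * (X - 4) * (X - C ((((3*n : ℕ) : ℂ) - 2)^2)) : ℂ[X]) = 0 := by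
  set s : ℂ := ((3*n : ℕ) : ℂ) - 2 with hs
  have e1 : (aeval (Bm n) ((X:ℂ[X])^2)) = Bm n * Bm n := by
    simp [sq]
  have e2 : aeval ((X:ℂ[X])^2) ((X - 1) * (X - 4) * (X - C (s^2)) : ℂ[X])
      = ((X - 1) * (X + 2) * (X - C s)) * ((X + 1) * (X - 2) * (X + C s)) := by
    simp only [map_mul, map_sub, aeval_X, aeval_one, aeval_C, algebraMap_eq, map_ofNat,
      map_pow, map_one]
    ring
  rw [← e1, aeval_algHom_apply, e2, map_mul]
  have hq : aeval (Bm n) ((X - 1) * (X + 2) * (X - C s) : ℂ[X]) = 0 := by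
    have := q0 n
    simp only [map_mul, map_sub, map_add, aeval_X, aeval_one, aeval_C, map_ofNat]
    exact this
  rw [hq, zero_mul]
end Bfacts

section GraphSide
variable {n : ℕ}

/-- the graph -/
def Gg (n : ℕ) : SimpleGraph (ZMod 2 × ZMod (3*n)) where
  Adj p q := p.1 ≠ q.1 ∧
    (q.2 - p.2 ≠ (n : ZMod (3*n)) ∧ q.2 - p.2 ≠ (2*(n : ZMod (3*n)))) ∧
    (p.2 - q.2 ≠ (n : ZMod (3*n)) ∧ p.2 - q.2 ≠ (2*(n : ZMod (3*n))))
  symm := by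
    constructor
    rintro p q ⟨h1, h2, h3⟩
    exact ⟨h1.symm, h3, h2⟩
  loopless := by constructor; rintro p ⟨h1, -⟩; exact h1 rfl

section facts
variable {n : ℕ}

lemma valn (hn : 1 < n) : ((n : ℕ) : ZMod (3*n)).val = n := ZMod.val_natCast_of_lt (by omega)
lemma val2n (hn : 1 < n) : (2*(n : ZMod (3*n))).val = 2*n := by
  have : (2*(n : ZMod (3*n))) = ((2*n : ℕ) : ZMod (3*n)) := by push_cast; ring
  rw [this]; exact ZMod.val_natCast_of_lt (by omega)
lemma val1 (hn : 1 < n) : (1 : ZMod (3*n)).val = 1 :=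
  haveI : Fact (1 < 3*n) := ⟨by omega⟩
  ZMod.val_one _

lemma t1_ne_t2 (hn : 1 < n) : (n : ZMod (3*n)) ≠ (2*(n : ZMod (3*n))) := by
  intro h
  have h1 := valn hn; have h2 := val2n hn
  rw [h] at h1; omega

lemma t1_ne_zero (hn : 1 < n) : (n : ZMod (3*n)) ≠ 0 := by
  intro h
  have h1 := valn hn
  rw [h, ZMod.val_zero] at h1; omega

lemma t2_ne_zero (hn : 1 < n) : (2*(n : ZMod (3*n))) ≠ 0 := by
  intro h
  have h1 := val2n hn
  rw [h, ZMod.val_zero] at h1; omega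

lemma one_ne_t1 (hn : 1 < n) : (1 : ZMod (3*n)) ≠ (n : ZMod (3*n)) := by
  intro h
  have h1 := valn hn; have h2 := val1 hn
  rw [← h] at h1; omega

lemma one_ne_t2 (hn : 1 < n) : (1 : ZMod (3*n)) ≠ (2*(n : ZMod (3*n))) := by
  intro h
  have h1 := val2n hn; have h2 := val1 hn
  rw [← h] at h1; omega

lemma neg_t1 (hn : 1 < n) : -(n : ZMod (3*n)) = (2*(n : ZMod (3*n))) := by
  have h : ((3*n : ℕ) : ZMod (3*n)) = 0 := ZMod.natCast_self _
  have h2 : (n : ZMod (3*n)) + (2*(n : ZMod (3*n))) = ((3*n : ℕ) : ZMod (3*n)) := by push_cast; ring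
  rw [h] at h2
  linear_combination -h2

lemma neg_t2 (hn : 1 < n) : -(2*(n : ZMod (3*n))) = (n : ZMod (3*n)) := by
  rw [← neg_t1 hn, neg_neg]

end facts

/-- block-diagonal embedding -/
noncomputable def iotaM (n : ℕ) (M : Matrix (ZMod (3*n)) (ZMod (3*n)) ℂ) :
    Matrix (ZMod 2 × ZMod (3*n)) (ZMod 2 × ZMod (3*n)) ℂ :=
  fun p q => if p.1 = q.1 then M p.2 q.2 else 0

/-- block-antidiagonal embedding -/
noncomputable def kappaM (n : ℕ) (M : Matrix (ZMod (3*n)) (ZMod (3*n)) ℂ) :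
    Matrix (ZMod 2 × ZMod (3*n)) (ZMod 2 × ZMod (3*n)) ℂ :=
  fun p q => if p.1 ≠ q.1 then M p.2 q.2 else 0

lemma sumZ2 (f : ZMod 2 → ℂ) : ∑ c, f c = f 0 + f 1 := by
  have : (Finset.univ : Finset (ZMod 2)) = {0, 1} := by decide
  rw [this, Finset.sum_insert (by decide), Finset.sum_singleton]

lemma z2cases (a : ZMod 2) : a = 0 ∨ a = 1 := by revert a; decide

lemma kappa_mul_kappa [NeZero (3*n)] (M M' : Matrix (ZMod (3*n)) (ZMod (3*n)) ℂ) :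
    kappaM n M * kappaM n M' = iotaM n (M * M') := by
  ext ⟨a, x⟩ ⟨b, y⟩
  simp only [Matrix.mul_apply, Fintype.sum_prod_type, iotaM, kappaM]
  rw [sumZ2]
  rcases z2cases a with ha | ha <;> rcases z2cases b with hb | hb <;>
    subst ha <;> subst hb <;>
    simp [Matrix.mul_apply]

lemma iota_mul_iota [NeZero (3*n)] (M M' : Matrix (ZMod (3*n)) (ZMod (3*n)) ℂ) :
    iotaM n M * iotaM n M' = iotaM n (M * M') := by
  ext ⟨a, x⟩ ⟨b, y⟩
  simp only [Matrix.mul_apply, Fintype.sum_prod_type, iotaM]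
  rw [sumZ2]
  rcases z2cases a with ha | ha <;> rcases z2cases b with hb | hb <;>
    subst ha <;> subst hb <;>
    simp [Matrix.mul_apply]

lemma iota_one [NeZero (3*n)] : iotaM n 1 = 1 := by
  ext ⟨a, x⟩ ⟨b, y⟩
  simp only [iotaM, Matrix.one_apply, Prod.mk.injEq]
  by_cases h1 : a = b <;> by_cases h2 : x = y <;> simp [h1, h2]

lemma iota_sub (M M' : Matrix (ZMod (3*n)) (ZMod (3*n)) ℂ) :
    iotaM n (M - M') = iotaM n M - iotaM n M' := by
  ext ⟨a, x⟩ ⟨b, y⟩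
  simp only [iotaM, Matrix.sub_apply]
  by_cases h : a = b <;> simp [h]

lemma iota_smul (c : ℂ) (M : Matrix (ZMod (3*n)) (ZMod (3*n)) ℂ) :
    iotaM n (c • M) = c • iotaM n M := by
  ext ⟨a, x⟩ ⟨b, y⟩
  simp only [iotaM, Matrix.smul_apply]
  by_cases h : a = b <;> simp [h]

lemma iota_zero : iotaM n (0 : Matrix (ZMod (3*n)) (ZMod (3*n)) ℂ) = 0 := by
  ext ⟨a, x⟩ ⟨b, y⟩
  simp only [iotaM, Matrix.zero_apply]
  by_cases h : a = b <;> simp [h]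

/-- adjacency matrix of Gg is the block anti-diagonal of Bm -/
lemma adjMat_Gg (hn : 1 < n) : adjMat (Gg n) = kappaM n (Bm n) := by
  have ht12 : (n : ZMod (3*n)) ≠ 2*(n : ZMod (3*n)) := t1_ne_t2 hn
  ext ⟨a, x⟩ ⟨b, y⟩
  simp only [adjMat, kappaM]
  by_cases hab : a = b
  · simp only [ne_eq, hab, not_true_eq_false, if_false, ite_eq_right_iff]
    rintro ⟨h, -⟩; exact absurd rfl h
  · rw [if_pos (show (a,x).1 ≠ (b,y).1 from hab)]
    have hcond : (Gg n).Adj (a,x) (b,y) ↔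
        (¬ y = x + (n : ZMod (3*n)) ∧ ¬ y = x + 2*(n : ZMod (3*n))) := by
      constructor
      · rintro ⟨-, ⟨c1, c2⟩, -⟩
        exact ⟨fun h => c1 (by linear_combination h), fun h => c2 (by linear_combination h)⟩
      · rintro ⟨c1, c2⟩
        refine ⟨hab, ⟨fun h => c1 (by linear_combination h), fun h => c2 (by linear_combination h)⟩,
          ⟨fun h => c2 ?_, fun h => c1 ?_⟩⟩
        · have := neg_t1 hn; linear_combination -h + this
        · have := neg_t2 hn; linear_combination -h + this
    simp only [hcond, Bm, Jm, Pm, Matrix.sub_apply]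
    by_cases h1 : y = x + (n : ZMod (3*n)) <;> by_cases h2 : y = x + 2*(n : ZMod (3*n))
    · exact absurd (by linear_combination h2 - h1) ht12
    · simp [h1, h2, ht12]
    · have ht21 : ¬ (2*(n : ZMod (3*n))) = (n : ZMod (3*n)) := fun h => ht12 h.symm
      simp [h1, h2, ht21]
    · simp [h1, h2]



lemma adj01 (hn : 1 < n) (x : ZMod (3*n)) : (Gg n).Adj (0, x) (1, x) := by
  refine ⟨zero_ne_one, ?_, ?_⟩ <;>
    exact (by simpa using ⟨(t1_ne_zero hn).symm, (t2_ne_zero hn).symm⟩)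

lemma adj10 (hn : 1 < n) (x : ZMod (3*n)) : (Gg n).Adj (1, x) (0, x + 1) := by
  have h1 := one_ne_t1 hn
  have h2 := one_ne_t2 hn
  refine ⟨one_ne_zero, ⟨?_, ?_⟩, ⟨?_, ?_⟩⟩
  · simpa using h1
  · simpa using h2
  · intro h
    have := neg_t1 hn
    exact h2 (by linear_combination -h + this)
  · intro h
    have := neg_t2 hn
    exact h1 (by linear_combination -h + this)

lemma reach_main (hn : 1 < n) (k : ℕ) :
    (Gg n).Reachable (0, 0) (0, (k : ZMod (3*n))) ∧ (Gg n).Reachable (0, 0) (1, (k : ZMod (3*n))) := by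
  haveI : NeZero (3*n) := ⟨by omega⟩
  induction k with
  | zero =>
    simp only [Nat.cast_zero]
    exact ⟨SimpleGraph.Reachable.refl _, (adj01 hn (0 : ZMod (3*n))).reachable⟩
  | succ k ih =>
    have hc : ((k : ZMod (3*n)) + 1) = ((k+1 : ℕ) : ZMod (3*n)) := by push_cast; ring
    have s1 : (Gg n).Reachable (0, 0) (0, ((k+1 : ℕ) : ZMod (3*n))) :=
      ih.2.trans (hc ▸ (adj10 hn (k : ZMod (3*n))).reachable)
    exact ⟨s1, s1.trans (adj01 hn _).reachable⟩

lemma conn (hn : 1 < n) : (Gg n).Connected := by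
  haveI : NeZero (3*n) := ⟨by omega⟩
  rw [SimpleGraph.connected_iff_exists_forall_reachable]
  refine ⟨(0, 0), ?_⟩
  rintro ⟨a, x⟩
  have hx : ((x.val : ℕ) : ZMod (3*n)) = x := ZMod.natCast_rightInverse x
  rcases z2cases a with ha | ha <;> subst ha
  · exact hx ▸ (reach_main hn x.val).1
  · exact hx ▸ (reach_main hn x.val).2

lemma z2ne : ∀ a b : ZMod 2, (¬ a = b) ↔ b = a + 1 := by decide

lemma adj_iff_s14 (hn : 1 < n) (a b : ZMod 2) (x y : ZMod (3*n)) :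
    (Gg n).Adj (a,x) (b,y) ↔ (¬ a = b ∧ ¬ y = x + (n : ZMod (3*n)) ∧ ¬ y = x + 2*(n : ZMod (3*n))) := by
  constructor
  · rintro ⟨hab, ⟨c1, c2⟩, -⟩
    exact ⟨hab, fun h => c1 (by linear_combination h), fun h => c2 (by linear_combination h)⟩
  · rintro ⟨hab, c1, c2⟩
    refine ⟨hab, ⟨fun h => c1 (by linear_combination h), fun h => c2 (by linear_combination h)⟩,
      ⟨fun h => c2 ?_, fun h => c1 ?_⟩⟩
    · have := neg_t1 hn; linear_combination -h + this
    · have := neg_t2 hn; linear_combination -h + this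

lemma degree_eq (hn : 1 < n) (a : ZMod 2) (x : ZMod (3*n)) :
    haveI : NeZero (3*n) := ⟨by omega⟩
    ((Gg n).neighborSet (a,x)).ncard = 3*n - 2 := by
  haveI : NeZero (3*n) := ⟨by omega⟩
  have hset : (Gg n).neighborSet (a,x)
      = (fun y => (a+1, y)) '' (↑(({x + (n : ZMod (3*n)), x + 2*(n : ZMod (3*n))} : Finset (ZMod (3*n)))ᶜ) : Set (ZMod (3*n))) := by
    ext ⟨b,y⟩
    simp only [SimpleGraph.mem_neighborSet, adj_iff_s14 hn, Set.mem_image, Finset.coe_compl,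
      Set.mem_compl_iff, Finset.coe_insert, Set.mem_insert_iff, Finset.coe_singleton,
      Set.mem_singleton_iff, not_or]
    constructor
    · rintro ⟨h1, h2, h3⟩
      exact ⟨y, ⟨h2, h3⟩, by rw [← (z2ne a b).mp h1]⟩
    · rintro ⟨z, ⟨h2, h3⟩, hz⟩
      obtain ⟨hb, hy⟩ := Prod.ext_iff.mp hz.symm
      simp only at hb hy
      subst hy
      exact ⟨(z2ne a b).mpr hb, h2, h3⟩
  rw [hset, Set.ncard_image_of_injective _ (fun y z h => (Prod.ext_iff.mp h).2),
    Set.ncard_coe_finset, Finset.card_compl]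
  have hne : x + (n : ZMod (3*n)) ≠ x + 2*(n : ZMod (3*n)) := by
    intro h; exact t1_ne_t2 hn (by linear_combination h)
  rw [Finset.card_insert_of_notMem (by simpa using hne), Finset.card_singleton]
  simp [ZMod.card]

end GraphSide
end AuxIntegral

set_option maxHeartbeats 1000000 in
/-- For each integer `n > 1` there is a connected `(3n-2)`-regular integral graph
on `6n` vertices. -/
theorem exists_connected_regular_integral_6n' (n : ℕ) (hn : 1 < n) :
    ∃ Γ : SimpleGraph (Fin (6 * n)),
      Γ.Connected ∧ (∀ v, (Γ.neighborSet v).ncard = 3 * n - 2) ∧ IsIntegral Γ := by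
  haveI : NeZero (3*n) := ⟨by omega⟩
  haveI : Nonempty (ZMod (3*n)) := ⟨0⟩
  have hcard : Fintype.card (Fin (6*n)) = Fintype.card (ZMod 2 × ZMod (3*n)) := by
    simp [ZMod.card]; ring
  let e : Fin (6*n) ≃ (ZMod 2 × ZMod (3*n)) := Fintype.equivOfCardEq hcard
  refine ⟨(Gg n).comap ⇑e, ?_, ?_, ?_⟩
  · -- connected
    have iso : (Gg n).comap ⇑e ≃g Gg n := ⟨e, Iff.rfl⟩
    exact iso.connected_iff.mpr (conn hn)
  · -- degrees
    intro v
    have hset : ((Gg n).comap ⇑e).neighborSet v = ⇑e ⁻¹' ((Gg n).neighborSet (e v)) := rfl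
    rw [hset, ← Equiv.image_symm_eq_preimage, Set.ncard_image_of_injective _ e.symm.injective]
    have := degree_eq hn (e v).1 (e v).2
    simpa using this
  · -- integral
    intro z hz
    have hsub : adjMat ((Gg n).comap ⇑e) = (adjMat (Gg n)).submatrix ⇑e ⇑e := rfl
    have hre : (adjMat (Gg n)).submatrix ⇑e ⇑e
        = (Matrix.reindexAlgEquiv ℂ ℂ e.symm) (adjMat (Gg n)) := by
      rw [Matrix.reindexAlgEquiv_apply, Matrix.reindex_apply, Equiv.symm_symm]
    rw [hsub, hre, AlgEquiv.spectrum_eq] at hz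
    -- annihilating polynomial
    set s : ℂ := ((3*n : ℕ) : ℂ) - 2 with hs
    set A := adjMat (Gg n) with hA
    set B := Bm n with hB
    have hA2 : A * A = iotaM n (B * B) := by rw [hA, hB, adjMat_Gg hn, kappa_mul_kappa]
    set P : ℂ[X] := (X^2 - 1) * (X^2 - 4) * (X^2 - C (s^2)) with hP
    have iota_algebraMap : ∀ c : ℂ,
        iotaM n (algebraMap ℂ (Matrix (ZMod (3*n)) (ZMod (3*n)) ℂ) c)
          = algebraMap ℂ (Matrix (ZMod 2 × ZMod (3*n)) (ZMod 2 × ZMod (3*n)) ℂ) c := by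
      intro c
      rw [Algebra.algebraMap_eq_smul_one, Algebra.algebraMap_eq_smul_one, iota_smul, iota_one]
    have h1m : (1 : Matrix (ZMod 2 × ZMod (3*n)) (ZMod 2 × ZMod (3*n)) ℂ) = iotaM n 1 :=
      iota_one.symm
    have h4m : (4 : Matrix (ZMod 2 × ZMod (3*n)) (ZMod 2 × ZMod (3*n)) ℂ) = iotaM n 4 := by
      rw [show (4 : Matrix (ZMod (3*n)) (ZMod (3*n)) ℂ)
            = algebraMap ℂ _ (4:ℂ) from (map_ofNat _ 4).symm, iota_algebraMap, map_ofNat]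
    have hsm : algebraMap ℂ (Matrix (ZMod 2 × ZMod (3*n)) (ZMod 2 × ZMod (3*n)) ℂ) (s^2)
        = iotaM n (algebraMap ℂ _ (s^2)) := (iota_algebraMap _).symm
    have haPA : aeval A P = 0 := by
      have expand : aeval A P = (A^2 - 1) * (A^2 - 4) * (A^2 - algebraMap ℂ _ (s^2)) := by
        simp only [hP, map_mul, map_sub, map_pow, aeval_X, map_one, map_ofNat, aeval_C]
      rw [expand, sq, hA2, h1m, h4m, hsm, ← iota_sub, ← iota_sub, ← iota_sub,
        iota_mul_iota, iota_mul_iota]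
      have inner : (B*B - 1) * (B*B - 4) * (B*B - algebraMap ℂ _ (s^2))
          = aeval (B*B) ((X - 1) * (X - 4) * (X - C (s^2)) : ℂ[X]) := by
        simp only [map_mul, map_sub, aeval_X, map_one, map_ofNat, aeval_C]
      rw [inner, hB, vBB n, iota_zero]
    -- spectral mapping
    have hmem : eval z P ∈ spectrum ℂ (aeval A P) :=
      spectrum.subset_polynomial_aeval A P ⟨z, hz, rfl⟩
    rw [haPA, spectrum.zero_eq] at hmem
    have hz0 : (z^2 - 1) * (z^2 - 4) * (z^2 - s^2) = 0 := by
      have he : eval z P = (z^2 - 1) * (z^2 - 4) * (z^2 - s^2) := by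
        simp [hP]
      rwa [he] at hmem
    have key : ∀ c : ℂ, z^2 - c^2 = 0 → z = c ∨ z = -c := by
      intro c h
      have h2 : (z - c) * (z + c) = 0 := by linear_combination h
      rcases mul_eq_zero.mp h2 with h' | h'
      · exact Or.inl (by linear_combination h')
      · exact Or.inr (by linear_combination h')
    rcases mul_eq_zero.mp hz0 with h12 | h3
    · rcases mul_eq_zero.mp h12 with h1 | h2
      · rcases key 1 (by linear_combination h1) with h | h
        · exact ⟨1, by simpa using h⟩
        · exact ⟨-1, by rw [h]; norm_num⟩
      · rcases key 2 (by linear_combination h2) with h | h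
        · exact ⟨2, by rw [h]; norm_num⟩
        · exact ⟨-2, by rw [h]; norm_num⟩
    · rcases key s h3 with h | h
      · exact ⟨3*(n:ℤ) - 2, by rw [h, hs]; push_cast; ring⟩
      · exact ⟨-(3*(n:ℤ) - 2), by rw [h, hs]; push_cast; ring⟩

end U6nPaper
end

section
/- Let S = S₁ ∪ S₂ ⊆ U_{6n} ∖ {1}, where every element of S₁ is even and every element of S₂ is odd. Then for every 0 ≤ k ≤ n−1: ψ_k(S) = ψ_k(S₁) and ψ_k(S²) = ψ_k(S₁²) + ψ_k(S₂²). -/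
open Complex SemidirectProduct Polynomial
open scoped Pointwise

namespace U6nPaper

lemma psi_zero_of_odd {n : ℕ} (k : ℕ) {g : U6n n} (h : ¬ IsEvenElt g) :
    psi n k g = 0 := if_neg h

lemma isEvenElt_mul {n : ℕ} [NeZero n] (s t : U6n n) :
    IsEvenElt (s * t) ↔ (IsEvenElt s ↔ IsEvenElt t) := by
  haveI : NeZero (2 * n) := ⟨by have := NeZero.ne n; omega⟩
  unfold IsEvenElt
  have h : (s * t).right = s.right * t.right := rfl
  rw [h, toAdd_mul, ZMod.val_add]
  rw [Nat.even_iff, Nat.mod_mod_of_dvd _ ⟨n, rfl⟩, ← Nat.even_iff, Nat.even_add]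

/-- For `S = S₁ ∪ S₂ ⊆ U_{6n} ∖ {1}` with `S₁` consisting of even elements and `S₂` of odd
elements, `ψ_k(S) = ψ_k(S₁)` and `ψ_k(S²) = ψ_k(S₁²) + ψ_k(S₂²)` for all `0 ≤ k ≤ n-1`. -/
theorem psi_sum_split (n : ℕ) [NeZero n] (S₁ S₂ : Finset (U6n n))
    (hS₁ : ∀ g ∈ S₁, IsEvenElt g) (hS₂ : ∀ g ∈ S₂, ¬ IsEvenElt g)
    (h1 : (1 : U6n n) ∉ S₁ ∪ S₂) (k : ℕ) (hk : k ≤ n - 1) :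
    fsum (psi n k) (S₁ ∪ S₂) = fsum (psi n k) S₁ ∧
    fsum2 (psi n k) (S₁ ∪ S₂) = fsum2 (psi n k) S₁ + fsum2 (psi n k) S₂ := by
  have hdisj : Disjoint S₁ S₂ := by
    rw [Finset.disjoint_left]
    intro g hg1 hg2
    exact hS₂ g hg2 (hS₁ g hg1)
  constructor
  · unfold fsum
    rw [Finset.sum_union hdisj, Finset.sum_eq_zero (fun g hg => psi_zero_of_odd k (hS₂ g hg)),
      add_zero]
  · unfold fsum2
    rw [Finset.sum_union hdisj]
    congr 1
    · apply Finset.sum_congr rfl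
      intro s hs
      have hz : ∑ t ∈ S₂, psi n k (s * t) = 0 :=
        Finset.sum_eq_zero (fun t ht => psi_zero_of_odd k (by
          rw [isEvenElt_mul]; simp [hS₁ s hs, hS₂ t ht]))
      rw [Finset.sum_union hdisj, hz, add_zero]
    · apply Finset.sum_congr rfl
      intro s hs
      have hz : ∑ t ∈ S₁, psi n k (s * t) = 0 :=
        Finset.sum_eq_zero (fun t ht => psi_zero_of_odd k (by
          rw [isEvenElt_mul]; simp [hS₂ s hs, hS₁ t ht]))
      rw [Finset.sum_union hdisj, hz, zero_add]


end U6nPaper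
end
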